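/- Let C and D be categories with finite limits and let f : C → D be a functor preserving finite limits. Then the left Kan extension f_! : Psh(C) → Psh(D) along the Yoneda embedding (the unique colimit-preserving functor with f_!(y(c)) ≅ y(f(c))) preserves finite limits. -/

import Mathlib

open CategoryTheory Limits

universe u

/-- Let `C` and `D` be categories with finite limits and `f : C ⥤ D` a
functor preserving finite limits.  Then the left Kan extension
`f_! : Psh(C) ⥤ Psh(D)` along the Yoneda embedding, i.e. the (essentially unique)
colimit-preserving functor `L` equipped with an isomorphism `yoneda ⋙ L ≅ f ⋙ yoneda`,
preserves finite limits. -/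
theorem stmt0 {C D : Type u} [SmallCategory C] [SmallCategory D]
    [HasFiniteLimits C] [HasFiniteLimits D]
    (f : C ⥤ D) [PreservesFiniteLimits f]
    (L : (Cᵒᵖ ⥤ Type u) ⥤ (Dᵒᵖ ⥤ Type u)) [PreservesColimits L]
    (e : yoneda ⋙ L ≅ f ⋙ yoneda) :
    Nonempty (PreservesFiniteLimits L) := by
  have hLan : PreservesFiniteLimits (f.op.lan : (Cᵒᵖ ⥤ Type u) ⥤ Dᵒᵖ ⥤ Type u) :=
    inferInstance
  have i₁ :=
    Presheaf.uniqueExtensionAlongULiftYoneda.{u} L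
      (Functor.isoWhiskerLeft f (uliftYonedaIsoYoneda.{u, u, u} (C := D)) ≪≫ e.symm ≪≫
        Functor.isoWhiskerRight (uliftYonedaIsoYoneda.{u, u, u} (C := C)).symm L)
  have : PreservesColimits (f.op.lan : (Cᵒᵖ ⥤ Type u) ⥤ Dᵒᵖ ⥤ Type u) :=
    (f.op.lanAdjunction (Type u)).leftAdjoint_preservesColimits
  have i₂ :=
    Presheaf.uniqueExtensionAlongULiftYoneda.{u} (f.op.lan : (Cᵒᵖ ⥤ Type u) ⥤ Dᵒᵖ ⥤ Type u)
      (Presheaf.compULiftYonedaIsoULiftYonedaCompLan.{u} f)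
  exact ⟨preservesFiniteLimits_of_natIso (i₂ ≪≫ i₁.symm)⟩
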